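/- Let R be a commutative integral domain and let ⋆ be a semistar operation of finite type on R. Then R is a ⋆-SFT-ring if and only if each quasi-⋆-prime ideal of R is a ⋆-SFT-ideal. -/
import Mathlib


open Pointwise

/-- A semistar operation on an integral domain `R` with quotient field `K`:
a map `E ↦ E^⋆` on the nonzero `R`-submodules of `K` satisfying the usual axioms.
(The map is defined on all submodules, but the axioms are only required for the
nonzero ones.) -/
structure SemistarOperation (R K : Type*) [CommRing R] [IsDomain R] [Field K]
    [Algebra R K] [IsFractionRing R K] where
  star : Submodule R K → Submodule R K
  smul_star : ∀ (x : K), x ≠ 0 → ∀ E : Submodule R K, E ≠ ⊥ → star (x • E) = x • star E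
  mono : ∀ E F : Submodule R K, E ≠ ⊥ → E ≤ F → star E ≤ star F
  le_star : ∀ E : Submodule R K, E ≠ ⊥ → E ≤ star E
  star_star : ∀ E : Submodule R K, E ≠ ⊥ → star (star E) = star E

namespace SemistarOperation

variable {R K : Type*} [CommRing R] [IsDomain R] [Field K] [Algebra R K] [IsFractionRing R K]
variable (s : SemistarOperation R K)

/-- `⋆` is of finite type: for every nonzero submodule `E`, the module `E^⋆` is the
union of the `F^⋆` over the nonzero finitely generated submodules `F ⊆ E`. -/
def FiniteType : Prop :=
  ∀ E : Submodule R K, E ≠ ⊥ → ∀ x : K,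
    x ∈ s.star E ↔ ∃ F : Submodule R K, F.FG ∧ F ≠ ⊥ ∧ F ≤ E ∧ x ∈ s.star F

/-- `I^⋆`, for an ideal `I` of `R` (viewing `I` as a submodule of `K`). -/
def idealStar (I : Ideal R) : Submodule R K :=
  s.star (Submodule.map (Algebra.linearMap R K) I)

/-- `I^⋆ ∩ R`, as an ideal of `R`. -/
def contract (I : Ideal R) : Ideal R :=
  Submodule.comap (Algebra.linearMap R K) (s.idealStar I)

/-- A (nonzero) ideal `I` of `R` is a quasi-`⋆`-ideal if `I^⋆ ∩ R = I`. -/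
def IsQuasiStarIdeal (I : Ideal R) : Prop :=
  I ≠ ⊥ ∧ s.contract I = I

/-- A nonzero ideal `L` of `R` is `⋆`-finite if `L^⋆ = F^⋆` for some nonzero
finitely generated ideal `F` of `R`. -/
def IsStarFinite (L : Ideal R) : Prop :=
  L ≠ ⊥ ∧ ∃ F : Ideal R, F.FG ∧ F ≠ ⊥ ∧ s.idealStar F = s.idealStar L

/-- `⋆` is stable: it distributes over finite intersections (of nonzero submodules
with nonzero intersection). -/
def Stable : Prop :=
  ∀ E F : Submodule R K, E ≠ ⊥ → F ≠ ⊥ → E ⊓ F ≠ ⊥ →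
    s.star (E ⊓ F) = s.star E ⊓ s.star F

/-- `⋆-Min(I)`: the set of quasi-`⋆`-prime ideals of `R` minimal over `I`. -/
def starMin (I : Ideal R) : Set (Ideal R) :=
  {P | Minimal (fun Q : Ideal R => Q.IsPrime ∧ s.IsQuasiStarIdeal Q ∧ I ≤ Q) P}

/-- A nonzero ideal `I` of `R` is a `⋆`-SFT-ideal if there are a finitely generated
ideal `J ⊆ I` and a positive integer `k` with `a ^ k ∈ J^⋆` for every `a ∈ I^⋆`. -/
def IsSFT (I : Ideal R) : Prop :=
  I ≠ ⊥ ∧ ∃ J : Ideal R, J.FG ∧ J ≤ I ∧ ∃ k : ℕ, 0 < k ∧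
    ∀ a ∈ s.idealStar I, a ^ k ∈ s.idealStar J

/-- `R` is a `⋆`-SFT-ring if every nonzero ideal of `R` is a `⋆`-SFT-ideal. -/
def IsSFTRing : Prop := ∀ I : Ideal R, I ≠ ⊥ → s.IsSFT I

end SemistarOperation

section Aux

open Pointwise

namespace SemistarOperation

variable {R K : Type*} [CommRing R] [IsDomain R] [Field K] [Algebra R K] [IsFractionRing R K]
variable (s : SemistarOperation R K)

private lemma lin_inj : Function.Injective (Algebra.linearMap R K) :=
  IsFractionRing.injective R K

private lemma map_ne_bot {I : Ideal R} (hI : I ≠ ⊥) :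
    Submodule.map (Algebra.linearMap R K) I ≠ ⊥ := by
  intro h
  obtain ⟨x, hx, hx0⟩ := (Submodule.ne_bot_iff I).1 hI
  have : Algebra.linearMap R K x ∈ (⊥ : Submodule R K) := h ▸ ⟨x, hx, rfl⟩
  rw [Submodule.mem_bot] at this
  exact hx0 (lin_inj (by rw [this, map_zero]))

private lemma smul_ne_bot {f : K} (hf : f ≠ 0) {E : Submodule R K} (hE : E ≠ ⊥) :
    f • E ≠ ⊥ := by
  obtain ⟨v, hv, hv0⟩ := (Submodule.ne_bot_iff E).1 hE
  exact (Submodule.ne_bot_iff _).2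
    ⟨f • v, Submodule.smul_mem_pointwise_smul v f E hv,
      by simpa [smul_eq_mul] using mul_ne_zero hf hv0⟩

private lemma mul_ne_bot {E F : Submodule R K} (hE : E ≠ ⊥) (hF : F ≠ ⊥) :
    E * F ≠ ⊥ := by
  obtain ⟨v, hv, hv0⟩ := (Submodule.ne_bot_iff E).1 hE
  obtain ⟨w, hw, hw0⟩ := (Submodule.ne_bot_iff F).1 hF
  exact (Submodule.ne_bot_iff _).2 ⟨v * w, Submodule.mul_mem_mul hv hw, mul_ne_zero hv0 hw0⟩

private lemma mem_smul_sub {u : K} {F : Submodule R K} {x : K} (hx : x ∈ u • F) :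
    ∃ f ∈ F, u * f = x := by
  have : x ∈ (u • (F : Set K)) := by
    rwa [← Submodule.coe_pointwise_smul] at *
  obtain ⟨f, hf, hfx⟩ := this
  exact ⟨f, hf, hfx⟩

private lemma star_mul_le {E F : Submodule R K} (hE : E ≠ ⊥) (hF : F ≠ ⊥) :
    s.star E * F ≤ s.star (E * F) := by
  rw [Submodule.mul_le]
  intro m hm f hf
  rcases eq_or_ne f 0 with rfl | hf0
  · simpa using (s.star (E * F)).zero_mem
  have h1 : m * f ∈ f • s.star E := by
    have := Submodule.smul_mem_pointwise_smul m f _ hm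
    simpa [smul_eq_mul, mul_comm] using this
  rw [← s.smul_star f hf0 E hE] at h1
  refine s.mono _ _ (smul_ne_bot hf0 hE) ?_ h1
  intro x hx
  obtain ⟨e, he, rfl⟩ := mem_smul_sub hx
  rw [mul_comm f e]
  exact Submodule.mul_mem_mul he hf

private lemma mul_mem_star {E F : Submodule R K} (hE : E ≠ ⊥) (hF : F ≠ ⊥) {u v : K}
    (hu : u ∈ s.star E) (hv : v ∈ s.star F) : u * v ∈ s.star (E * F) := by
  rcases eq_or_ne u 0 with rfl | hu0
  · simpa using (s.star (E * F)).zero_mem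
  have h1 : u * v ∈ u • s.star F := by
    simpa [smul_eq_mul] using Submodule.smul_mem_pointwise_smul v u _ hv
  rw [← s.smul_star u hu0 F hF] at h1
  have hsEF : s.star E * F ≠ ⊥ := fun h =>
    mul_ne_bot hE hF (le_bot_iff.1 (h ▸ mul_le_mul' (s.le_star E hE) le_rfl))
  have h2 : s.star (u • F) ≤ s.star (E * F) := by
    calc s.star (u • F) ≤ s.star (s.star E * F) := by
          refine s.mono _ _ (smul_ne_bot hu0 hF) ?_
          intro x hx
          obtain ⟨f, hf, rfl⟩ := mem_smul_sub hx
          exact Submodule.mul_mem_mul hu hf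
      _ ≤ s.star (s.star (E * F)) := s.mono _ _ hsEF (s.star_mul_le hE hF)
      _ = s.star (E * F) := s.star_star _ (mul_ne_bot hE hF)
  exact h2 h1

private lemma idealStar_mono {I J : Ideal R} (hI : I ≠ ⊥) (hIJ : I ≤ J) :
    s.idealStar I ≤ s.idealStar J :=
  s.mono _ _ (map_ne_bot hI) (Submodule.map_mono hIJ)

private lemma map_ideal_mul (I J : Ideal R) :
    Submodule.map (Algebra.linearMap R K) (I * J) =
      Submodule.map (Algebra.linearMap R K) I * Submodule.map (Algebra.linearMap R K) J := by
  have h : Algebra.linearMap R K = (Algebra.ofId R K).toLinearMap := rfl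
  rw [h]
  exact Submodule.map_mul I J (Algebra.ofId R K)

private lemma mul_mem_idealStar {I J : Ideal R} (hI : I ≠ ⊥) (hJ : J ≠ ⊥) {u v : K}
    (hu : u ∈ s.idealStar I) (hv : v ∈ s.idealStar J) : u * v ∈ s.idealStar (I * J) := by
  unfold idealStar at *
  rw [map_ideal_mul]
  exact s.mul_mem_star (map_ne_bot hI) (map_ne_bot hJ) hu hv

/-- Finite type: replace a f.g. ideal inside `contract P` by a f.g. ideal inside `P`
with larger star. -/
private lemma exists_fg_le_of_le_contract (hs : s.FiniteType) {P J : Ideal R}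
    (hP : P ≠ ⊥) (hJ : J ≠ ⊥) (hJfg : J.FG) (hJle : J ≤ s.contract P) :
    ∃ J' : Ideal R, J'.FG ∧ J' ≤ P ∧ s.idealStar J ≤ s.idealStar J' := by
  classical
  obtain ⟨p0, hp0P, hp00⟩ := (Submodule.ne_bot_iff P).1 hP
  set J₀ : Ideal R := Ideal.span {p0} with hJ₀
  have hJ₀P : J₀ ≤ P := (Ideal.span_singleton_le_iff_mem P).2 hp0P
  have hJ₀fg : J₀.FG := ⟨{p0}, by simp [hJ₀]⟩
  have hJ₀ne : J₀ ≠ ⊥ := by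
    simp [hJ₀, Ideal.span_singleton_eq_bot, hp00]
  have key : ∀ g : R, ∃ Jg : Ideal R, Jg.FG ∧ Jg ≤ P ∧ Jg ≠ ⊥ ∧
      (g ∈ s.contract P → Algebra.linearMap R K g ∈
        s.star (Submodule.map (Algebra.linearMap R K) Jg)) := by
    intro g
    by_cases hg : g ∈ s.contract P
    · have hg' : Algebra.linearMap R K g ∈ s.star (Submodule.map (Algebra.linearMap R K) P) := hg
      obtain ⟨F, hFfg, hFne, hFle, hgF⟩ := (hs _ (map_ne_bot hP) _).1 hg'
      have hmapcomap : Submodule.map (Algebra.linearMap R K)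
          (Submodule.comap (Algebra.linearMap R K) F) = F := by
        rw [Submodule.map_comap_eq, inf_eq_right.2 (hFle.trans (LinearMap.map_le_range))]
      refine ⟨Submodule.comap (Algebra.linearMap R K) F, ?_, ?_, ?_, fun _ => ?_⟩
      · exact Submodule.fg_of_fg_map_injective _ (lin_inj) (hmapcomap ▸ hFfg)
      · intro x hx
        obtain ⟨p, hp, hpe⟩ := hFle hx
        rwa [← lin_inj hpe]
      · intro h
        apply hFne
        rw [← hmapcomap, h]
        exact Submodule.map_bot _
      · rw [hmapcomap]; exact hgF
    · exact ⟨J₀, hJ₀fg, hJ₀P, hJ₀ne, fun h => absurd h hg⟩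
  choose Jg hJgfg hJgP hJgne hJgstar using key
  obtain ⟨G, hG⟩ := hJfg
  set J' : Ideal R := G.sup Jg ⊔ J₀ with hJ'
  have hJ'fg : J'.FG := (Submodule.fg_finset_sup G Jg (fun g _ => hJgfg g)).sup hJ₀fg
  refine ⟨J', hJ'fg, ?_, ?_⟩
  · exact sup_le (Finset.sup_le fun g _ => hJgP g) hJ₀P
  · have hJ'ne : J' ≠ ⊥ := fun h => hJ₀ne (le_bot_iff.1 (h ▸ le_sup_right))
    have hmem : ∀ g ∈ G, Algebra.linearMap R K g ∈ s.star
        (Submodule.map (Algebra.linearMap R K) J') := by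
      intro g hg
      have hgc : (g : R) ∈ s.contract P := hJle (hG ▸ Ideal.subset_span hg)
      refine s.mono _ _ (map_ne_bot (hJgne g)) ?_ (hJgstar g hgc)
      exact Submodule.map_mono ((Finset.le_sup hg).trans le_sup_left)
    have hspan : Submodule.map (Algebra.linearMap R K) J ≤
        s.star (Submodule.map (Algebra.linearMap R K) J') := by
      rw [← hG, Ideal.span, Submodule.map_span, Submodule.span_le]
      rintro _ ⟨g, hg, rfl⟩
      exact hmem g hg
    calc s.idealStar J ≤ s.star (s.star (Submodule.map (Algebra.linearMap R K) J')) :=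
          s.mono _ _ (map_ne_bot hJ) hspan
      _ = s.idealStar J' := s.star_star _ (map_ne_bot hJ'ne)

end SemistarOperation

end Aux

/-- Let `⋆` be a semistar operation of finite type on the integral domain `R`.  Then
`R` is a `⋆`-SFT-ring if and only if each quasi-`⋆`-prime ideal of `R` is a
`⋆`-SFT-ideal. -/
theorem isSFTRing_iff_quasiStarPrime_isSFT {R K : Type*} [CommRing R] [IsDomain R]
    [Field K] [Algebra R K] [IsFractionRing R K] (s : SemistarOperation R K)
    (hs : s.FiniteType) :
    s.IsSFTRing ↔ ∀ P : Ideal R, P.IsPrime → s.IsQuasiStarIdeal P → s.IsSFT P := by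
  constructor
  · intro h P _ hQ
    exact h P hQ.1
  intro h I hI
  by_contra hIcon
  -- Zorn's lemma on the set of nonzero non-SFT ideals
  set S : Set (Ideal R) := {I : Ideal R | I ≠ ⊥ ∧ ¬ s.IsSFT I} with hS
  have hIS : I ∈ S := ⟨hI, hIcon⟩
  obtain ⟨P, -, hPmax⟩ := zorn_le_nonempty₀ S (fun c hcS hchain y hyc => by
    refine ⟨sSup c, ⟨?_, ?_⟩, fun z hz => le_sSup hz⟩
    · intro hbot
      exact (hcS hyc).1 (le_bot_iff.1 (hbot ▸ le_sSup hyc))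
    · rintro ⟨-, J, hJfg, hJle, k, hk, hmem⟩
      obtain ⟨I', hI'c, hJI'⟩ :=
        (CompleteLattice.isCompactElement_iff_le_of_directed_sSup_le (Ideal R) J).1
          ((Submodule.fg_iff_compact J).1 hJfg) c ⟨y, hyc⟩ hchain.directedOn hJle
      obtain ⟨hI'ne, hI'not⟩ := hcS hI'c
      exact hI'not ⟨hI'ne, J, hJfg, hJI', k, hk, fun a ha =>
        hmem a (s.idealStar_mono hI'ne (le_sSup hI'c) ha)⟩) I hIS
  obtain ⟨hPne, hPnot⟩ := hPmax.1
  -- every ideal strictly above P is SFT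
  have habove : ∀ Q : Ideal R, P < Q → s.IsSFT Q := by
    intro Q hQ
    by_contra hQnot
    have hQne : Q ≠ ⊥ := fun h => hPne (le_bot_iff.1 (h ▸ hQ.le))
    exact hQ.not_ge (hPmax.2 ⟨hQne, hQnot⟩ hQ.le)
  -- P is proper
  have hPtop : P ≠ ⊤ := by
    intro h
    apply hPnot
    refine ⟨hPne, ⊤, ⟨{1}, by simpa using Ideal.span_singleton_one⟩, h.ge, 1, one_pos, fun a ha => by simpa using (h ▸ ha)⟩
  -- P is prime
  have hPprime : P.IsPrime := by
    refine ⟨hPtop, ?_⟩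
    intro a b hab
    by_contra hcon2
    push_neg at hcon2
    obtain ⟨ha, hb⟩ := hcon2
    have hPa : P < P ⊔ Ideal.span {a} :=
      lt_of_le_of_ne le_sup_left
        (fun hEq => ha (hEq ▸ Submodule.mem_sup_right (Ideal.subset_span rfl)))
    have hPb : P < P ⊔ Ideal.span {b} :=
      lt_of_le_of_ne le_sup_left
        (fun hEq => hb (hEq ▸ Submodule.mem_sup_right (Ideal.subset_span rfl)))
    obtain ⟨-, B, hBfg, hBle, n, hn, hB⟩ := habove _ hPa
    obtain ⟨-, C, hCfg, hCle, m, hm, hC⟩ := habove _ hPb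
    rcases eq_or_ne B ⊥ with rfl | hBne
    · exact hPnot ⟨hPne, ⊥, Submodule.fg_bot, bot_le, n, hn, fun x hx =>
        hB x (s.idealStar_mono hPne le_sup_left hx)⟩
    rcases eq_or_ne C ⊥ with rfl | hCne
    · exact hPnot ⟨hPne, ⊥, Submodule.fg_bot, bot_le, m, hm, fun x hx =>
        hC x (s.idealStar_mono hPne le_sup_left hx)⟩
    -- the product B * C is a f.g. ideal contained in P which works
    apply hPnot
    refine ⟨hPne, B * C, Submodule.FG.mul hBfg hCfg, ?_, n + m, by positivity, ?_⟩
    · rw [Ideal.mul_le]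
      intro r hr t ht
      obtain ⟨p, hp, x, hx, rfl⟩ := Submodule.mem_sup.1 (hBle hr)
      obtain ⟨q, hq, z, hz, rfl⟩ := Submodule.mem_sup.1 (hCle ht)
      obtain ⟨u, rfl⟩ := Ideal.mem_span_singleton'.1 hx
      obtain ⟨v, rfl⟩ := Ideal.mem_span_singleton'.1 hz
      have heq : (p + u * a) * (q + v * b) =
          p * (q + v * b) + q * (u * a) + (u * v) * (a * b) := by ring
      rw [heq]
      exact P.add_mem (P.add_mem (P.mul_mem_right _ hp) (P.mul_mem_right _ hq))
        (P.mul_mem_left _ hab)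
    · intro x hx
      have hxn : x ^ n ∈ s.idealStar B := hB x (s.idealStar_mono hPne le_sup_left hx)
      have hxm : x ^ m ∈ s.idealStar C := hC x (s.idealStar_mono hPne le_sup_left hx)
      rw [pow_add]
      exact s.mul_mem_idealStar hBne hCne hxn hxm
  -- P is a quasi-⋆-ideal
  have hPquasi : s.IsQuasiStarIdeal P := by
    refine ⟨hPne, ?_⟩
    have hle : P ≤ s.contract P := by
      intro x hx
      exact s.le_star _ (SemistarOperation.map_ne_bot hPne) ⟨x, hx, rfl⟩
    by_contra hne
    have hlt : P < s.contract P := lt_of_le_of_ne hle (Ne.symm hne)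
    obtain ⟨-, J, hJfg, hJle, k, hk, hmem⟩ := habove _ hlt
    have hPle : s.idealStar P ≤ s.idealStar (s.contract P) := s.idealStar_mono hPne hle
    rcases eq_or_ne J ⊥ with rfl | hJne
    · exact hPnot ⟨hPne, ⊥, Submodule.fg_bot, bot_le, k, hk, fun x hx => hmem x (hPle hx)⟩
    obtain ⟨J', hJ'fg, hJ'le, hJ'star⟩ := s.exists_fg_le_of_le_contract hs hPne hJne hJfg hJle
    exact hPnot ⟨hPne, J', hJ'fg, hJ'le, k, hk, fun x hx => hJ'star (hmem x (hPle hx))⟩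
  exact hPnot (h P hPprime hPquasi)
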